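/- For i ∈ {1,2}, let Z_i be a subgroup of S_h × S_n, R_i a subgroup of Ω, and U_i = Z_i × R_i ≤ G. Then a social choice correspondence is both U_1-consistent and U_2-consistent if and only if it is ⟨U_1, U_2⟩-consistent, where ⟨U_1, U_2⟩ is the subgroup of G generated by U_1 ∪ U_2. In particular, a resolute scc is both U_1-consistent and U_2-consistent if and only if it is ⟨U_1, U_2⟩-consistent. -/

import Mathlib

/-!
Common framework: preferences on `n ≥ 2` alternatives (`Fin n`) expressed by `h ≥ 2`
individuals (`Fin h`).  Following the paper, a linear order `q ∈ L(N)` is identified with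
the permutation of `Fin n` sending each rank position (`0` = best) to the alternative
occupying that position.
-/

/-- A preference relation (a linear order on the set `Fin n` of alternatives), identified
with the permutation sending each rank position (`0` = best) to the alternative at
that position. -/
abbrev Pref (n : ℕ) := Equiv.Perm (Fin n)

/-- `x ⪰_q y` : alternative `x` is weakly preferred to `y` in `q`. -/
def prefGE {n : ℕ} (q : Pref n) (x y : Fin n) : Prop := q.symm x ≤ q.symm y

/-- `x ≻_q y` : alternative `x` is strictly preferred to `y` in `q`. -/
def prefGT {n : ℕ} (q : Pref n) (x y : Fin n) : Prop := q.symm x < q.symm y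

instance {n : ℕ} (q : Pref n) (x y : Fin n) : Decidable (prefGT q x y) :=
  inferInstanceAs (Decidable (q.symm x < q.symm y))

/-- A preference profile: one preference relation for each individual. -/
abbrev Profile (n h : ℕ) := Fin h → Pref n

/-- A social choice correspondence (the nonemptiness of its values is `IsSCC`). -/
abbrev SCC (n h : ℕ) := Profile n h → Set (Fin n)

/-- `C` has nonempty values, i.e. `C` really is a social choice correspondence. -/
def IsSCC {n h : ℕ} (C : SCC n h) : Prop := ∀ p, (C p).Nonempty

/-- `C` is resolute: it always selects exactly one alternative. -/
def Resolute {n h : ℕ} (C : SCC n h) : Prop := ∀ p, ∃ x, C p = {x}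

/-- `C'` is a refinement of `C`. -/
def Refines {n h : ℕ} (C' C : SCC n h) : Prop := ∀ p, C' p ⊆ C p

/-- The order-reversing permutation `ρ₀ : r ↦ n - r + 1`. -/
def rho0 (n : ℕ) : Equiv.Perm (Fin n) := Fin.revPerm

/-- The profile `p^{(id,id,ρ₀)}` obtained from `p` by reversing every individual
preference. -/
def revProfile {n h : ℕ} (p : Profile n h) : Profile n h := fun i => p i * rho0 n

/-- `C` is immune to the reversal bias. -/
def Immune {n h : ℕ} (C : SCC n h) : Prop :=
  ∀ (p : Profile n h) (x : Fin n), C p = {x} → C (revProfile p) ≠ C p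

/-- `Y` is a partition: nonempty, pairwise disjoint, covering blocks. -/
def IsPartition {α : Type*} {s : ℕ} (Y : Fin s → Finset α) : Prop :=
  (∀ j, (Y j).Nonempty) ∧ (∀ j k, j ≠ k → Disjoint (Y j) (Y k)) ∧ (∀ a, ∃ j, a ∈ Y j)

/-- The ambient group `S_h × S_n × S_n` (the third component is meant to range in `Ω`). -/
abbrev Amb (n h : ℕ) := Equiv.Perm (Fin h) × Equiv.Perm (Fin n) × Equiv.Perm (Fin n)

/-- The action `p ↦ p^g` of `g = (φ,ψ,ρ)` on profiles. -/
def gact {n h : ℕ} (g : Amb n h) (p : Profile n h) : Profile n h :=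
  fun i => g.2.1 * p (g.1⁻¹ i) * g.2.2

/-- The group `Ω = {id, ρ₀}`. -/
def OmegaGrp (n : ℕ) : Subgroup (Equiv.Perm (Fin n)) := Subgroup.zpowers (rho0 n)

/-- The group `G = S_h × S_n × Ω`. -/
def bigG (n h : ℕ) : Subgroup (Amb n h) :=
  (⊤ : Subgroup (Equiv.Perm (Fin h))).prod
    ((⊤ : Subgroup (Equiv.Perm (Fin n))).prod (OmegaGrp n))

/-- `U`-consistency of a social choice correspondence `C`: for every `p` and every
`(φ,ψ,ρ) ∈ U`, if `ρ = id` then `C(p^{(φ,ψ,id)}) = ψ C(p)`, and if `ρ = ρ₀` and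
`|C(p)| = 1` then `C(p^{(φ,ψ,ρ₀)}) ≠ ψ C(p)`. -/
def UConsistent {n h : ℕ} (U : Subgroup (Amb n h)) (C : SCC n h) : Prop :=
  ∀ (p : Profile n h), ∀ g ∈ U,
    (g.2.2 = 1 → C (gact g p) = g.2.1 '' C p) ∧
    (g.2.2 = rho0 n → ∀ x : Fin n, C p = {x} → C (gact g p) ≠ g.2.1 '' C p)

/-- A subgroup `U` of `G` is regular: for every profile `p` there is `ψ⋆ ∈ S_n`
conjugate to `ρ₀` with `Stab_U(p) ⊆ (S_h × {id} × {id}) ∪ (S_h × {ψ⋆} × {ρ₀})`. -/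
def RegularSubgroup {n h : ℕ} (U : Subgroup (Amb n h)) : Prop :=
  ∀ p : Profile n h, ∃ ψs : Equiv.Perm (Fin n), IsConj (rho0 n) ψs ∧
    ∀ g ∈ U, gact g p = p →
      (g.2.1 = 1 ∧ g.2.2 = 1) ∨ (g.2.1 = ψs ∧ g.2.2 = rho0 n)

/-- The subgroup `Z × R` of `G`, for `Z ≤ S_h × S_n` and `R ≤ Ω`. -/
def prodSubgroup {n h : ℕ}
    (Z : Subgroup (Equiv.Perm (Fin h) × Equiv.Perm (Fin n)))
    (R : Subgroup (Equiv.Perm (Fin n))) : Subgroup (Amb n h) :=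
  (Z.prod R).map
    (MulEquiv.prodAssoc :
      (Equiv.Perm (Fin h) × Equiv.Perm (Fin n)) × Equiv.Perm (Fin n) ≃* Amb n h).toMonoidHom

section Helpers

variable {n h : ℕ}

lemma gact_mul' (g g' : Amb n h) (p : Profile n h)
    (hc : g.2.2 * g'.2.2 = g'.2.2 * g.2.2) :
    gact (g * g') p = gact g (gact g' p) := by
  funext i
  simp only [gact, Prod.fst_mul, Prod.snd_mul, mul_inv_rev, Equiv.Perm.mul_apply]
  rw [hc]
  simp [mul_assoc]

lemma gact_one' (p : Profile n h) : gact (1 : Amb n h) p = p := by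
  funext i; simp [gact]

lemma rho0_sq (n : ℕ) : rho0 n * rho0 n = 1 := by
  ext x
  simp [rho0]

lemma rho0_ne_one (hn : 2 ≤ n) : rho0 n ≠ 1 := by
  intro hcon
  have := congrArg (fun e : Equiv.Perm (Fin n) => (e ⟨0, by omega⟩ : Fin n)) hcon
  simp only [rho0, Fin.revPerm_apply, Equiv.Perm.coe_one, id_eq] at this
  have := congrArg Fin.val this
  simp [Fin.rev] at this
  omega

lemma mem_Omega {n : ℕ} {r : Equiv.Perm (Fin n)} (hr : r ∈ OmegaGrp n) :
    r = 1 ∨ r = rho0 n := by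
  obtain ⟨k, rfl⟩ := Subgroup.mem_zpowers_iff.mp hr
  have h2 : (rho0 n) ^ (2 : ℤ) = 1 := by
    rw [show (2 : ℤ) = ((2 : ℕ) : ℤ) from rfl, zpow_natCast, pow_two, rho0_sq]
  rcases Int.even_or_odd k with ⟨m, rfl⟩ | ⟨m, rfl⟩
  · left
    rw [← two_mul, zpow_mul, h2, one_zpow]
  · right
    rw [zpow_add, zpow_mul, h2, one_zpow, one_mul, zpow_one]

lemma mem_prodSubgroup {n h : ℕ}
    {Z : Subgroup (Equiv.Perm (Fin h) × Equiv.Perm (Fin n))}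
    {R : Subgroup (Equiv.Perm (Fin n))} {g : Amb n h} :
    g ∈ prodSubgroup Z R ↔ (g.1, g.2.1) ∈ Z ∧ g.2.2 ∈ R := by
  constructor
  · rintro ⟨⟨⟨a, b⟩, c⟩, ⟨hz, hr⟩, rfl⟩
    exact ⟨hz, hr⟩
  · rintro ⟨hz, hr⟩
    exact ⟨((g.1, g.2.1), g.2.2), ⟨hz, hr⟩, rfl⟩

lemma prodSubgroup_mono {n h : ℕ}
    {Z Z' : Subgroup (Equiv.Perm (Fin h) × Equiv.Perm (Fin n))}
    {R R' : Subgroup (Equiv.Perm (Fin n))} (hZ : Z ≤ Z') (hR : R ≤ R') :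
    prodSubgroup Z R ≤ prodSubgroup Z' R' := by
  intro g hg
  rw [mem_prodSubgroup] at hg ⊢
  exact ⟨hZ hg.1, hR hg.2⟩

/-- `z` acts consistently with trivial `ρ`-component. -/
def GoodId (C : SCC n h) (z : Equiv.Perm (Fin h) × Equiv.Perm (Fin n)) : Prop :=
  ∀ p, C (gact (z.1, z.2, 1) p) = z.2 '' C p

/-- The set of `GoodId` pairs forms a subgroup of `S_h × S_n`. -/
def goodIdSubgroup (C : SCC n h) : Subgroup (Equiv.Perm (Fin h) × Equiv.Perm (Fin n)) where
  carrier := {z | GoodId C z}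
  one_mem' := by
    intro p
    simp [gact_one' (n := n) (h := h) p]
    exact congrArg C (gact_one' (n := n) (h := h) p)
  mul_mem' := by
    intro z w hz hw p
    have hdec : gact ((z * w).1, (z * w).2, 1) p
        = gact (z.1, z.2, 1) (gact (w.1, w.2, 1) p) := by
      have := gact_mul' (n := n) (h := h) (z.1, z.2, 1) (w.1, w.2, 1) p (by simp)
      simpa using this
    rw [hdec, hz _, hw p]
    ext x
    simp [Set.image_image]
  inv_mem' := by
    intro z hz p
    have hp : gact (z.1, z.2, 1) (gact (z⁻¹.1, z⁻¹.2, 1) p) = p := by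
      rw [← gact_mul' (n := n) (h := h) (z.1, z.2, 1) (z⁻¹.1, z⁻¹.2, 1) p (by simp)]
      have : ((z.1, z.2, 1) : Amb n h) * (z⁻¹.1, z⁻¹.2, 1) = 1 := by
        ext <;> simp
      rw [this, gact_one']
    have := hz (gact (z⁻¹.1, z⁻¹.2, 1) p)
    rw [hp] at this
    rw [this]
    ext x
    simp [Set.image_image]

end Helpers

/-- Proposition `U,V-corr`: for `U_i = Z_i × R_i` with `Z_i ≤ S_h × S_n`
and `R_i ≤ Ω`, a scc is both `U_1`-consistent and `U_2`-consistent iff it is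
`⟨U_1, U_2⟩`-consistent (the join `U_1 ⊔ U_2` is the subgroup generated by `U_1 ∪ U_2`);
in particular the same holds for resolute sccs. -/
theorem statement7 {n h : ℕ} (hh : 2 ≤ h) (hn : 2 ≤ n)
    (Z1 Z2 : Subgroup (Equiv.Perm (Fin h) × Equiv.Perm (Fin n)))
    (R1 R2 : Subgroup (Equiv.Perm (Fin n)))
    (hR1 : R1 ≤ OmegaGrp n) (hR2 : R2 ≤ OmegaGrp n) (C : SCC n h) :
    ((UConsistent (prodSubgroup Z1 R1) C ∧ UConsistent (prodSubgroup Z2 R2) C) ↔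
      UConsistent (prodSubgroup Z1 R1 ⊔ prodSubgroup Z2 R2) C) ∧
    (Resolute C →
      ((UConsistent (prodSubgroup Z1 R1) C ∧ UConsistent (prodSubgroup Z2 R2) C) ↔
        UConsistent (prodSubgroup Z1 R1 ⊔ prodSubgroup Z2 R2) C)) := by
  have main : (UConsistent (prodSubgroup Z1 R1) C ∧ UConsistent (prodSubgroup Z2 R2) C) ↔
      UConsistent (prodSubgroup Z1 R1 ⊔ prodSubgroup Z2 R2) C := by
    constructor
    · rintro ⟨h1, h2⟩
      -- the Z-parts of the generators are GoodId
      have hZgood : Z1 ⊔ Z2 ≤ goodIdSubgroup C := by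
        refine sup_le ?_ ?_
        · intro z hz
          intro p
          exact (h1 p (z.1, z.2, 1)
            (mem_prodSubgroup.mpr ⟨by simpa using hz, one_mem _⟩)).1 rfl
        · intro z hz
          intro p
          exact (h2 p (z.1, z.2, 1)
            (mem_prodSubgroup.mpr ⟨by simpa using hz, one_mem _⟩)).1 rfl
      intro p g hg
      have hmem : (g.1, g.2.1) ∈ Z1 ⊔ Z2 ∧ g.2.2 ∈ R1 ⊔ R2 := by
        have hle : prodSubgroup Z1 R1 ⊔ prodSubgroup Z2 R2
            ≤ prodSubgroup (Z1 ⊔ Z2) (R1 ⊔ R2) :=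
          sup_le (prodSubgroup_mono le_sup_left le_sup_left)
            (prodSubgroup_mono le_sup_right le_sup_right)
        exact mem_prodSubgroup.mp (hle hg)
      have hgood : GoodId C (g.1, g.2.1) := hZgood hmem.1
      have hRle : g.2.2 ∈ OmegaGrp n := (sup_le hR1 hR2) hmem.2
      rcases mem_Omega hRle with hr | hr
      · constructor
        · intro _
          have hgeq : g = (g.1, g.2.1, 1) := by rw [← hr]
          exact hgeq ▸ hgood p
        · intro hr0
          exact absurd (hr.symm.trans hr0).symm (rho0_ne_one hn)
      · -- ρ-component is ρ₀
        have hrho : rho0 n ∈ R1 ∨ rho0 n ∈ R2 := by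
          by_contra hcon
          push_neg at hcon
          have hb1 : R1 ≤ ⊥ := by
            intro r hrr
            rcases mem_Omega (hR1 hrr) with h' | h'
            · simp [Subgroup.mem_bot, h']
            · exact absurd (h' ▸ hrr) hcon.1
          have hb2 : R2 ≤ ⊥ := by
            intro r hrr
            rcases mem_Omega (hR2 hrr) with h' | h'
            · simp [Subgroup.mem_bot, h']
            · exact absurd (h' ▸ hrr) hcon.2
          have : g.2.2 ∈ (⊥ : Subgroup (Equiv.Perm (Fin n))) := (sup_le hb1 hb2) hmem.2
          rw [Subgroup.mem_bot] at this
          exact rho0_ne_one hn (hr ▸ this)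
        constructor
        · intro h1'
          exact absurd (hr ▸ h1') (rho0_ne_one hn)
        · intro _ x hx hEq
          -- decompose g = (g.1, g.2.1, 1) * (1, 1, ρ₀)
          have hdec : gact g p = gact (g.1, g.2.1, 1) (gact (1, 1, rho0 n) p) := by
            have hgeq : g = ((g.1, g.2.1, 1) : Amb n h) * (1, 1, rho0 n) := by
              rw [← hr]; simp [Prod.ext_iff]
            conv_lhs => rw [hgeq]
            exact gact_mul' _ _ _ (by simp)
          -- (1,1,ρ₀) belongs to U₁ or U₂, hence the reversal bias condition
          have hbias : C (gact (1, 1, rho0 n) p) ≠ C p := by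
            rcases hrho with hmem1 | hmem1
            · have := (h1 p (1, 1, rho0 n)
                (mem_prodSubgroup.mpr ⟨one_mem _, hmem1⟩)).2 rfl x hx
              simpa using this
            · have := (h2 p (1, 1, rho0 n)
                (mem_prodSubgroup.mpr ⟨one_mem _, hmem1⟩)).2 rfl x hx
              simpa using this
          apply hbias
          have hEq' : g.2.1 '' C (gact (1, 1, rho0 n) p) = g.2.1 '' C p := by
            rw [← hgood (gact (1, 1, rho0 n) p), ← hdec, hEq]
          exact Set.image_injective.mpr g.2.1.injective hEq'
    · intro H
      refine ⟨fun p g hg => H p g ?_, fun p g hg => H p g ?_⟩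
      · exact SetLike.le_def.mp le_sup_left hg
      · exact SetLike.le_def.mp le_sup_right hg
  exact ⟨main, fun _ => main⟩
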